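/- arXiv:2602.09009 — 4 statements merged into one kernel-verified Lean document; each statement's English description precedes it below -/
import Mathlib

section
/- Let c₁, c₂ ≥ 0 and c₃ > 0 be constants, T > 0, and x : [0,T] → ℝ a differentiable function with x(t) > 0 for all t ∈ [0,T]. If x'(t) ≤ (c₁ + c₂√t)·e^{-c₃ t}·x(t) for all t ∈ [0,T], then x(t) ≤ x(0)·e^M for all t ∈ [0,T], where M = c₁/c₃ + (√π/2)·c₂·c₃^{-3/2}. -/
open MeasureTheory Set Real

lemma integral_g_Ioi {c₁ c₂ c₃ : ℝ} (hc₃ : 0 < c₃) :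
    ∫ s in Ioi (0:ℝ), (c₁ + c₂ * Real.sqrt s) * Real.exp (-c₃ * s)
      = c₁ / c₃ + Real.sqrt Real.pi / 2 * c₂ * c₃ ^ (-(3 : ℝ) / 2) := by
  have h1 : IntegrableOn (fun s : ℝ => c₁ * Real.exp (-c₃ * s)) (Ioi 0) :=
    (exp_neg_integrableOn_Ioi 0 hc₃).const_mul c₁
  have h2' : IntegrableOn (fun s : ℝ => s ^ (1/2 : ℝ) * Real.exp (-c₃ * s ^ (1:ℝ))) (Ioi 0) :=
    integrableOn_rpow_mul_exp_neg_mul_rpow (by norm_num) one_pos hc₃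
  have h2'' : IntegrableOn (fun s : ℝ => Real.sqrt s * Real.exp (-c₃ * s)) (Ioi 0) :=
    h2'.congr_fun (fun s hs => by dsimp only; rw [Real.rpow_one, Real.sqrt_eq_rpow]) measurableSet_Ioi
  have h2 : IntegrableOn (fun s : ℝ => c₂ * (Real.sqrt s * Real.exp (-c₃ * s))) (Ioi 0) :=
    h2''.const_mul c₂
  have hsplit : ∀ s ∈ Ioi (0:ℝ), (c₁ + c₂ * Real.sqrt s) * Real.exp (-c₃ * s)
      = c₁ * Real.exp (-c₃ * s) + c₂ * (Real.sqrt s * Real.exp (-c₃ * s)) := by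
    intro s _; ring
  rw [setIntegral_congr_fun measurableSet_Ioi hsplit, integral_add h1 h2,
    integral_const_mul, integral_const_mul]
  have e1 : ∫ s in Ioi (0:ℝ), Real.exp (-c₃ * s) = 1 / c₃ := by
    have h := Real.integral_rpow_mul_exp_neg_mul_Ioi (a := 1) (r := c₃) one_pos hc₃
    rw [Real.Gamma_one, mul_one, Real.rpow_one] at h
    rw [← h]
    refine setIntegral_congr_fun measurableSet_Ioi (fun s hs => ?_)
    rw [show (1:ℝ)-1 = 0 by norm_num, Real.rpow_zero, one_mul, neg_mul]
  have e2 : ∫ s in Ioi (0:ℝ), Real.sqrt s * Real.exp (-c₃ * s)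
      = Real.sqrt Real.pi / 2 * c₃ ^ (-(3 : ℝ) / 2) := by
    have h := Real.integral_rpow_mul_exp_neg_mul_Ioi (a := (3:ℝ)/2) (r := c₃)
      (by norm_num) hc₃
    have hG : Real.Gamma ((3:ℝ)/2) = Real.sqrt Real.pi / 2 := by
      rw [show (3:ℝ)/2 = 1/2 + 1 by norm_num, Real.Gamma_add_one (by norm_num),
        Real.Gamma_one_half_eq]
      ring
    have hp : ((1:ℝ) / c₃) ^ ((3:ℝ)/2) = c₃ ^ (-(3:ℝ)/2) := by
      rw [one_div, ← Real.rpow_neg_one c₃, ← Real.rpow_mul hc₃.le]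
      norm_num
    rw [hG, hp] at h
    rw [show Real.sqrt Real.pi / 2 * c₃ ^ (-(3:ℝ)/2) = c₃ ^ (-(3:ℝ)/2) * (Real.sqrt Real.pi / 2) by ring, ← h]
    refine setIntegral_congr_fun measurableSet_Ioi (fun s hs => ?_)
    rw [show (3:ℝ)/2-1 = 1/2 by norm_num, ← Real.sqrt_eq_rpow, neg_mul]
  rw [e1, e2]
  ring

/-- Gronwall-type bound. If `x > 0` on `[0,T]` and
`x'(t) ≤ (c₁ + c₂ √t) e^{-c₃ t} x(t)` on `[0,T]`, then `x(t) ≤ x(0) e^M`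
where `M = c₁/c₃ + (√π/2) c₂ c₃^{-3/2}`. -/
theorem gronwall_type_bound (c₁ c₂ c₃ T : ℝ)
    (hc₁ : 0 ≤ c₁) (hc₂ : 0 ≤ c₂) (hc₃ : 0 < c₃) (hT : 0 < T)
    (x x' : ℝ → ℝ)
    (hderiv : ∀ t ∈ Set.Icc (0 : ℝ) T, HasDerivAt x (x' t) t)
    (hpos : ∀ t ∈ Set.Icc (0 : ℝ) T, 0 < x t)
    (hineq : ∀ t ∈ Set.Icc (0 : ℝ) T,
      x' t ≤ (c₁ + c₂ * Real.sqrt t) * Real.exp (-c₃ * t) * x t) :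
    ∀ t ∈ Set.Icc (0 : ℝ) T,
      x t ≤ x 0 * Real.exp (c₁ / c₃ + Real.sqrt Real.pi / 2 * c₂ * c₃ ^ (-(3 : ℝ) / 2)) := by
  set M : ℝ := c₁ / c₃ + Real.sqrt Real.pi / 2 * c₂ * c₃ ^ (-(3 : ℝ) / 2) with hM
  set g : ℝ → ℝ := fun s => (c₁ + c₂ * Real.sqrt s) * Real.exp (-c₃ * s) with hg
  have hgcont : Continuous g := by
    apply Continuous.mul
    · exact continuous_const.add (continuous_const.mul Real.continuous_sqrt)
    · exact Real.continuous_exp.comp (continuous_const.mul continuous_id)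
  set G : ℝ → ℝ := fun t => ∫ s in (0:ℝ)..t, g s with hG
  have hGderiv : ∀ t : ℝ, HasDerivAt G (g t) t := fun t =>
    intervalIntegral.integral_hasDerivAt_right (hgcont.intervalIntegrable 0 t)
      (hgcont.stronglyMeasurableAtFilter _ _) hgcont.continuousAt
  -- G t ≤ M for t ≥ 0
  have hint : IntegrableOn g (Ioi 0) := by
    have := (exp_neg_integrableOn_Ioi 0 hc₃).const_mul c₁
    have h2' : IntegrableOn (fun s : ℝ => s ^ (1/2 : ℝ) * Real.exp (-c₃ * s ^ (1:ℝ))) (Ioi 0) :=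
      integrableOn_rpow_mul_exp_neg_mul_rpow (by norm_num) one_pos hc₃
    have h2'' : IntegrableOn (fun s : ℝ => Real.sqrt s * Real.exp (-c₃ * s)) (Ioi 0) :=
      h2'.congr_fun (fun s hs => by dsimp only; rw [Real.rpow_one, Real.sqrt_eq_rpow]) measurableSet_Ioi
    have h2 : IntegrableOn (fun s : ℝ => c₂ * (Real.sqrt s * Real.exp (-c₃ * s))) (Ioi 0) :=
      h2''.const_mul c₂
    have key : (fun s : ℝ => c₁ * Real.exp (-c₃ * s) + c₂ * (Real.sqrt s * Real.exp (-c₃ * s))) = g := by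
      funext s; simp only [hg]; ring
    exact key ▸ (this.add h2)
  have hGleM : ∀ t : ℝ, 0 ≤ t → G t ≤ M := by
    intro t ht
    have h1 : G t = ∫ s in Ioc (0:ℝ) t, g s := intervalIntegral.integral_of_le ht
    rw [hM, ← integral_g_Ioi hc₃, h1]
    refine setIntegral_mono_set hint ?_ (HasSubset.Subset.eventuallyLE Ioc_subset_Ioi_self)
    filter_upwards [ae_restrict_mem measurableSet_Ioi] with s hs
    have : 0 ≤ Real.sqrt s := Real.sqrt_nonneg s
    have : 0 < Real.exp (-c₃ * s) := Real.exp_pos _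
    positivity
  -- φ := log ∘ x - G is antitone on Icc 0 T
  set φ : ℝ → ℝ := fun t => Real.log (x t) - G t with hφ
  have hφderiv : ∀ t ∈ Set.Icc (0:ℝ) T, HasDerivAt φ (x' t / x t - g t) t := fun t ht =>
    ((hderiv t ht).log (hpos t ht).ne').sub (hGderiv t)
  have hanti : AntitoneOn φ (Set.Icc 0 T) := by
    refine antitoneOn_of_deriv_nonpos (convex_Icc 0 T)
      (fun t ht => (hφderiv t ht).continuousAt.continuousWithinAt)
      (fun t ht => ?_) (fun t ht => ?_)
    · rw [interior_Icc] at ht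
      exact ((hφderiv t (Set.Ioo_subset_Icc_self ht)).differentiableAt.differentiableWithinAt)
    · rw [interior_Icc] at ht
      have ht' : t ∈ Set.Icc (0:ℝ) T := Ioo_subset_Icc_self ht
      rw [(hφderiv t ht').deriv]
      have hx := hpos t ht'
      have : x' t / x t ≤ g t := (div_le_iff₀ hx).mpr (hineq t ht')
      linarith
  intro t ht
  have h0 : (0:ℝ) ∈ Set.Icc (0:ℝ) T := ⟨le_refl 0, hT.le⟩
  have hφle : φ t ≤ φ 0 := hanti h0 ht ht.1
  have hG0 : G 0 = 0 := intervalIntegral.integral_same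
  have hlog : Real.log (x t) ≤ Real.log (x 0) + M := by
    have := hGleM t ht.1
    simp only [hφ, hG0, sub_zero] at hφle
    linarith
  calc x t = Real.exp (Real.log (x t)) := (Real.exp_log (hpos t ht)).symm
    _ ≤ Real.exp (Real.log (x 0) + M) := Real.exp_le_exp.mpr hlog
    _ = x 0 * Real.exp M := by rw [Real.exp_add, Real.exp_log (hpos 0 h0)]
end

section
/- Consider the gradient flow w' = -uv·a, u' = -wv·a, v' = -wu·a with a = wuv and target σ = 0. If 0 < u(0) = v(0) ≤ w(0) ≤ 1, then for all t ≥ 0: 0 ≤ u(t) = v(t) ≤ w(t) ≤ 1. -/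
open Set

/-- If the derivative `d` of `f` satisfies `f * d ≤ 0` on `(0,∞)`, then `f²` is
nonincreasing from `0`. -/
lemma gf_sq_le (f d : ℝ → ℝ) (hf : ∀ t, 0 ≤ t → HasDerivAt f (d t) t)
    (hd : ∀ t, 0 < t → f t * d t ≤ 0) :
    ∀ t, 0 ≤ t → f t ^ 2 ≤ f 0 ^ 2 := by
  have hA : AntitoneOn (fun t => f t ^ 2) (Ici (0 : ℝ)) := by
    apply antitoneOn_of_deriv_nonpos (convex_Ici 0)
    · exact fun t ht => ((hf t ht).continuousAt.continuousWithinAt).pow 2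
    · intro t ht
      rw [interior_Ici] at ht
      exact (((hf t ht.le).pow 2).differentiableAt).differentiableWithinAt
    · intro t ht
      rw [interior_Ici] at ht
      rw [((hf t ht.le).fun_pow 2).deriv]
      have := hd t ht
      norm_num
      nlinarith [this]
  intro t ht
  exact hA (self_mem_Ici) ht ht

/-- A function with zero derivative on `[0,∞)` is constant there. -/
lemma gf_const (g : ℝ → ℝ) (hg : ∀ t, 0 ≤ t → HasDerivAt g 0 t) :
    ∀ t, 0 ≤ t → g t = g 0 := by
  have hcont : ContinuousOn g (Ici (0 : ℝ)) :=
    fun t ht => (hg t ht).continuousAt.continuousWithinAt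
  have hdiff : DifferentiableOn ℝ g (interior (Ici (0 : ℝ))) := by
    intro t ht
    rw [interior_Ici] at ht
    exact (hg t ht.le).differentiableAt.differentiableWithinAt
  have hderiv : ∀ t ∈ interior (Ici (0 : ℝ)), deriv g t = 0 := by
    intro t ht
    rw [interior_Ici] at ht
    exact (hg t ht.le).deriv
  have hA : AntitoneOn g (Ici (0 : ℝ)) :=
    antitoneOn_of_deriv_nonpos (convex_Ici 0) hcont hdiff
      (fun t ht => le_of_eq (hderiv t ht))
  have hM : MonotoneOn g (Ici (0 : ℝ)) :=
    monotoneOn_of_deriv_nonneg (convex_Ici 0) hcont hdiff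
      (fun t ht => ge_of_eq (hderiv t ht))
  intro t ht
  exact le_antisymm (hA self_mem_Ici ht ht) (hM self_mem_Ici ht ht)

/-- Grönwall-style: if `f a = 0` and `|f'| ≤ |f|` on `[a,b]`, then `f b = 0`. -/
lemma gf_gronwall_zero (f d : ℝ → ℝ) (a b : ℝ) (hab : a ≤ b)
    (hf : ∀ s, s ∈ Icc a b → HasDerivAt f (d s) s)
    (hbound : ∀ s, s ∈ Ico a b → |d s| ≤ |f s|)
    (h0 : f a = 0) : f b = 0 := by
  have key := norm_le_gronwallBound_of_norm_deriv_right_le (f := f) (f' := d)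
      (δ := 0) (K := 1) (ε := 0) (a := a) (b := b)
      (fun s hs => (hf s hs).continuousAt.continuousWithinAt)
      (fun s hs => (hf s (Ico_subset_Icc_self hs)).hasDerivWithinAt)
      (by simp [h0])
      (fun s hs => by simpa using hbound s hs)
      b (right_mem_Icc.2 hab)
  rw [gronwallBound_ε0_δ0] at key
  have : |f b| ≤ 0 := by simpa using key
  have := abs_nonneg (f b)
  have : |f b| = 0 := le_antisymm ‹|f b| ≤ 0› (abs_nonneg _)
  exact abs_eq_zero.mp this

/-- Invariance of nonnegativity: if `f' = -c·f` with `|c| ≤ 1` and `f 0 > 0`,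
then `f` stays nonnegative. -/
lemma gf_nonneg (f c : ℝ → ℝ) (hf : ∀ s, 0 ≤ s → HasDerivAt f (-(c s) * f s) s)
    (hc : ∀ s, 0 ≤ s → |c s| ≤ 1) (h0 : 0 < f 0) :
    ∀ t, 0 ≤ t → 0 ≤ f t := by
  intro t ht
  by_contra hneg
  push_neg at hneg
  have hcont : ContinuousOn f (Icc 0 t) :=
    fun s hs => (hf s hs.1).continuousAt.continuousWithinAt
  have hIVT := intermediate_value_Icc' ht hcont
  have h0mem : (0 : ℝ) ∈ Icc (f t) (f 0) := ⟨hneg.le, h0.le⟩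
  obtain ⟨t₀, ht₀, hft₀⟩ := hIVT h0mem
  have hz : f t = 0 := by
    apply gf_gronwall_zero f (fun s => -(c s) * f s) t₀ t ht₀.2
    · intro s hs
      exact hf s (le_trans ht₀.1 hs.1)
    · intro s hs
      have hcs := hc s (le_trans ht₀.1 hs.1)
      rw [abs_mul, abs_neg]
      nlinarith [abs_nonneg (f s), abs_nonneg (c s)]
    · exact hft₀
  linarith

/-- For the gradient flow of `ℓ = ½(wuv)²` (target `σ = 0`),
if `0 < u(0) = v(0) ≤ w(0) ≤ 1`, then `0 ≤ u(t) = v(t) ≤ w(t) ≤ 1` for all `t ≥ 0`. -/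
theorem gradient_flow_ordering_preserved (w u v : ℝ → ℝ)
    (hw : ∀ t, 0 ≤ t → HasDerivAt w (-(u t * v t) * (w t * u t * v t)) t)
    (hu : ∀ t, 0 ≤ t → HasDerivAt u (-(w t * v t) * (w t * u t * v t)) t)
    (hv : ∀ t, 0 ≤ t → HasDerivAt v (-(w t * u t) * (w t * u t * v t)) t)
    (hu0 : 0 < u 0) (huv0 : u 0 = v 0) (huw0 : u 0 ≤ w 0) (hw0 : w 0 ≤ 1) :
    ∀ t, 0 ≤ t → 0 ≤ u t ∧ u t = v t ∧ u t ≤ w t ∧ w t ≤ 1 := by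
  -- squared bounds
  have hwsq : ∀ t, 0 ≤ t → w t ^ 2 ≤ w 0 ^ 2 :=
    gf_sq_le w _ hw (fun t ht => by nlinarith [sq_nonneg (w t * u t * v t)])
  have husq : ∀ t, 0 ≤ t → u t ^ 2 ≤ u 0 ^ 2 :=
    gf_sq_le u _ hu (fun t ht => by nlinarith [sq_nonneg (w t * u t * v t)])
  have hvsq : ∀ t, 0 ≤ t → v t ^ 2 ≤ v 0 ^ 2 :=
    gf_sq_le v _ hv (fun t ht => by nlinarith [sq_nonneg (w t * u t * v t)])
  have hw0sq : w 0 ^ 2 ≤ 1 := by nlinarith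
  have hu0sq : u 0 ^ 2 ≤ 1 := by nlinarith
  have hv0sq : v 0 ^ 2 ≤ 1 := by nlinarith [huv0]
  have hW1 : ∀ t, 0 ≤ t → w t ^ 2 ≤ 1 := fun t ht => le_trans (hwsq t ht) hw0sq
  have hU1 : ∀ t, 0 ≤ t → u t ^ 2 ≤ 1 := fun t ht => le_trans (husq t ht) hu0sq
  have hV1 : ∀ t, 0 ≤ t → v t ^ 2 ≤ 1 := fun t ht => le_trans (hvsq t ht) hv0sq
  -- u = v everywhere
  have huv : ∀ t, 0 ≤ t → u t = v t := by
    intro t ht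
    have hz : u t - v t = 0 := by
      apply gf_gronwall_zero (fun s => u s - v s)
          (fun s => w s ^ 2 * u s * v s * (u s - v s)) 0 t ht
      · intro s hs
        have := (hu s hs.1).fun_sub (hv s hs.1)
        exact this.congr_deriv (by ring)
      · intro s hs
        have h1 := hW1 s hs.1
        have h2 := hU1 s hs.1
        have h3 := hV1 s hs.1
        rw [abs_mul]
        have hle : |w s ^ 2 * u s * v s| ≤ 1 := by
          rw [abs_mul, abs_mul, abs_of_nonneg (sq_nonneg (w s))]
          have hau : |u s| ≤ 1 := by nlinarith [sq_abs (u s), abs_nonneg (u s)]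
          have hav : |v s| ≤ 1 := by nlinarith [sq_abs (v s), abs_nonneg (v s)]
          have h4 : w s ^ 2 * |u s| ≤ 1 := mul_le_one₀ h1 (abs_nonneg _) hau
          exact mul_le_one₀ h4 (abs_nonneg _) hav
        nlinarith [abs_nonneg (u s - v s)]
      · simp [huv0]
    linarith
  -- nonnegativity of u and w
  have hupos : ∀ t, 0 ≤ t → 0 ≤ u t := by
    apply gf_nonneg u (fun s => (w s * v s) ^ 2)
    · intro s hs
      convert hu s hs using 1
      ring
    · intro s hs
      rw [abs_of_nonneg (sq_nonneg _)]
      have h1 := hW1 s hs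
      have h3 := hV1 s hs
      nlinarith [sq_nonneg (w s), sq_nonneg (v s)]
    · exact hu0
  have hwpos : ∀ t, 0 ≤ t → 0 ≤ w t := by
    apply gf_nonneg w (fun s => (u s * v s) ^ 2)
    · intro s hs
      convert hw s hs using 1
      ring
    · intro s hs
      rw [abs_of_nonneg (sq_nonneg _)]
      have h2 := hU1 s hs
      have h3 := hV1 s hs
      nlinarith [sq_nonneg (u s), sq_nonneg (v s)]
    · linarith
  -- conservation of w² - u²
  have hcons : ∀ t, 0 ≤ t → w t ^ 2 - u t ^ 2 = w 0 ^ 2 - u 0 ^ 2 := by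
    apply gf_const
    intro t ht
    have := ((hw t ht).fun_pow 2).fun_sub ((hu t ht).fun_pow 2)
    exact this.congr_deriv (by ring)
  intro t ht
  have hcw := hcons t ht
  have hup := hupos t ht
  have hwp := hwpos t ht
  have hsq : u t ^ 2 ≤ w t ^ 2 := by nlinarith
  refine ⟨hup, huv t ht, ?_, ?_⟩
  · nlinarith
  · have := hW1 t ht
    nlinarith
end

section
/- Consider the scalar system a(t) = w(t)u(t)², where under the gradient flow with σ = 0 and 0 < u(0) = v(0) ≤ w(0) ≤ 1, a satisfies a'(t) = -a(t)³/w(t)² - 2w(t)a(t)², a(t) ∈ [0,1], and w(t) ≥ a(t)^{1/3}. Then a'(t) ≥ -3a(t)², and consequently a(t) ≥ a(0)/(1 + 3a(0)t) for all t ≥ 0. -/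
open Set

/-- If `a(t) ∈ [0,1]`, `w(t) ≥ a(t)^{1/3}`, `w(t) ≤ 1`, and
`a'(t) = -a(t)³/w(t)² - 2 w(t) a(t)²`, then `a'(t) ≥ -3 a(t)²` and consequently
`a(t) ≥ a(0) / (1 + 3 a(0) t)` for all `t ≥ 0`. -/
theorem a_dynamics_lower_bound (a w : ℝ → ℝ)
    (ha01 : ∀ t, 0 ≤ t → a t ∈ Set.Icc (0 : ℝ) 1)
    (hwa : ∀ t, 0 ≤ t → (a t) ^ ((1 : ℝ) / 3) ≤ w t)
    (hw1 : ∀ t, 0 ≤ t → w t ≤ 1)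
    (hderiv : ∀ t, 0 ≤ t →
      HasDerivAt a (-(a t) ^ 3 / (w t) ^ 2 - 2 * w t * (a t) ^ 2) t) :
    (∀ t, 0 ≤ t → -3 * (a t) ^ 2 ≤ -(a t) ^ 3 / (w t) ^ 2 - 2 * w t * (a t) ^ 2) ∧
    (∀ t, 0 ≤ t → a 0 / (1 + 3 * a 0 * t) ≤ a t) := by
  -- Part 1: the derivative bound
  have key : ∀ t, 0 ≤ t → -3 * (a t) ^ 2 ≤ -(a t) ^ 3 / (w t) ^ 2 - 2 * w t * (a t) ^ 2 := by
    intro t ht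
    obtain ⟨hA0, hA1⟩ := ha01 t ht
    rcases eq_or_lt_of_le hA0 with h | h
    · rw [← h]; norm_num
    · have hWpos : 0 < w t := lt_of_lt_of_le (Real.rpow_pos_of_pos h _) (hwa t ht)
      have hW2 : (a t) ^ ((2 : ℝ) / 3) ≤ (w t) ^ 2 := by
        have := pow_le_pow_left₀ (Real.rpow_nonneg hA0 _) (hwa t ht) 2
        calc (a t) ^ ((2 : ℝ) / 3) = ((a t) ^ ((1 : ℝ) / 3)) ^ 2 := by
              rw [← Real.rpow_natCast ((a t) ^ ((1:ℝ)/3)) 2, ← Real.rpow_mul hA0]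
              norm_num
          _ ≤ (w t) ^ 2 := this
      have hrp : (0 : ℝ) < (a t) ^ ((2 : ℝ) / 3) := Real.rpow_pos_of_pos h _
      have h1 : (a t) ^ 3 / (w t) ^ 2 ≤ (a t) ^ 3 / (a t) ^ ((2 : ℝ) / 3) :=
        div_le_div_of_nonneg_left (pow_nonneg hA0 3) hrp hW2
      have h2 : (a t) ^ 3 / (a t) ^ ((2 : ℝ) / 3) = (a t) ^ ((7 : ℝ) / 3) := by
        rw [← Real.rpow_natCast (a t) 3, ← Real.rpow_sub h]
        norm_num
      have h3 : (a t) ^ ((7 : ℝ) / 3) ≤ (a t) ^ (2 : ℝ) :=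
        Real.rpow_le_rpow_of_exponent_ge h hA1 (by norm_num)
      have h3' : (a t) ^ ((7 : ℝ) / 3) ≤ (a t) ^ 2 :=
        h3.trans_eq (by rw [show (2:ℝ) = ((2:ℕ):ℝ) by norm_num, Real.rpow_natCast])
      have hfull : (a t) ^ 3 / (w t) ^ 2 ≤ (a t) ^ 2 := by
        calc (a t) ^ 3 / (w t) ^ 2 ≤ (a t) ^ 3 / (a t) ^ ((2:ℝ)/3) := h1
          _ = (a t) ^ ((7:ℝ)/3) := h2
          _ ≤ (a t) ^ 2 := h3'
      have h4 : 2 * w t * (a t) ^ 2 ≤ 2 * (a t) ^ 2 := by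
        nlinarith [sq_nonneg (a t), hw1 t ht]
      have hneg : -(a t) ^ 3 / (w t) ^ 2 = -((a t) ^ 3 / (w t) ^ 2) := neg_div _ _
      rw [hneg]
      clear h1 h2 h3 h3' hW2 hrp hwa hderiv
      linarith
  refine ⟨key, ?_⟩
  -- Part 2: ODE comparison
  have ha0 : 0 ≤ a 0 := (ha01 0 le_rfl).1
  set c := a 0 with hc
  -- the comparison function
  set b : ℝ → ℝ := fun t => c / (1 + 3 * c * t) with hbdef
  have hden : ∀ x : ℝ, 0 ≤ x → (0 : ℝ) < 1 + 3 * c * x := by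
    intro x hx; nlinarith
  have hb : ∀ x : ℝ, 0 ≤ x → HasDerivAt b (-3 * (b x) ^ 2) x := by
    intro x hx
    have hd := (hden x hx).ne'
    have hlin : HasDerivAt (fun t : ℝ => 1 + 3 * c * t) (3 * c) x := by
      simpa using ((hasDerivAt_id x).const_mul (3 * c)).const_add 1
    have : HasDerivAt (fun y => c / (1 + 3 * c * y)) ((0 * (1 + 3 * c * x) - c * (3 * c)) / (1 + 3 * c * x) ^ 2) x :=
      (hasDerivAt_const x c).div hlin hd
    convert this using 1
    show -3 * (c / (1 + 3 * c * x)) ^ 2 = _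
    rw [div_pow]
    field_simp
    ring
  intro t ht
  -- epsilon trick
  have hmain : ∀ ε : ℝ, 0 < ε → b t - ε * (1 + t) ≤ a t := by
    intro ε hε
    set f : ℝ → ℝ := fun s => b s - ε * (1 + s) with hfdef
    have hf' : ∀ x : ℝ, 0 ≤ x → HasDerivAt f (-3 * (b x) ^ 2 - ε) x := by
      intro x hx
      have h2 : HasDerivAt (fun s : ℝ => ε * (1 + s)) ε x := by
        simpa using ((hasDerivAt_id x).const_add 1).const_mul ε
      exact (hb x hx).sub h2
    have := image_le_of_deriv_right_lt_deriv_boundary'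
      (f := f) (f' := fun x => -3 * (b x) ^ 2 - ε) (a := 0) (b := t)
      (B := a) (B' := fun x => -(a x) ^ 3 / (w x) ^ 2 - 2 * w x * (a x) ^ 2)
      (fun x hx => ((hf' x hx.1).sub (hasDerivAt_const x 0)).continuousAt.continuousWithinAt.congr
        (fun y _ => by simp) (by simp))
      (fun x hx => (hf' x hx.1).hasDerivWithinAt)
      (by
        show f 0 ≤ a 0
        have : b 0 = c := by simp [hbdef]
        simp only [hfdef, this]
        nlinarith)
      (fun x hx => (hderiv x hx.1).continuousAt.continuousWithinAt)
      (fun x hx => (hderiv x hx.1).hasDerivWithinAt)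
      (by
        intro x hx heq
        have hx0 : 0 ≤ x := hx.1
        have haxnn : 0 ≤ a x := (ha01 x hx0).1
        have hax_lt : a x < b x := by
          have : 0 < ε * (1 + x) := by nlinarith
          simp only [hfdef] at heq
          linarith
        have hsq : (a x) ^ 2 ≤ (b x) ^ 2 := by nlinarith
        have := key x hx0
        show -3 * (b x) ^ 2 - ε < -(a x) ^ 3 / (w x) ^ 2 - 2 * w x * (a x) ^ 2
        linarith)
    exact this (right_mem_Icc.2 ht)
  -- take ε → 0
  by_contra hcon
  push_neg at hcon
  have h1t : (0 : ℝ) < 1 + t := by linarith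
  have hε : (0 : ℝ) < (b t - a t) / (2 * (1 + t)) := by
    apply div_pos (by linarith) (by linarith)
  have := hmain _ hε
  have heq : (b t - a t) / (2 * (1 + t)) * (1 + t) = (b t - a t) / 2 := by
    field_simp
  rw [heq] at this
  linarith
end

section
/- Consider the loss L(t) = ½‖W₃(t)(W₂(t)W₁(t)+I) - A‖_F² under gradient flow. Then ‖W₃(t)‖_F ≤ ‖W₃(0)‖_F + √(t·L(0)) for all t ≥ 0. -/
open Matrix intervalIntegral

noncomputable def sqF {m n : ℕ} (M : Matrix (Fin m) (Fin n) ℝ) : ℝ := ∑ i, ∑ j, (M i j) ^ 2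

lemma sqF_nonneg {m n : ℕ} (M : Matrix (Fin m) (Fin n) ℝ) : 0 ≤ sqF M :=
  Finset.sum_nonneg fun i _ => Finset.sum_nonneg fun j _ => sq_nonneg _

/-- Frobenius norm of a matrix. -/
noncomputable def frob {m n : ℕ} (A : Matrix (Fin m) (Fin n) ℝ) : ℝ :=
  Real.sqrt (∑ i, ∑ j, (A i j) ^ 2)

lemma frob_eq {m n : ℕ} (M : Matrix (Fin m) (Fin n) ℝ) : frob M = Real.sqrt (sqF M) := rfl

lemma frob_sq {m n : ℕ} (M : Matrix (Fin m) (Fin n) ℝ) : frob M ^ 2 = sqF M := by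
  rw [frob_eq, Real.sq_sqrt (sqF_nonneg M)]

lemma frob_eq_norm {m n : ℕ} (M : Matrix (Fin m) (Fin n) ℝ) :
    frob M = ‖((WithLp.equiv 2 ((Fin m × Fin n) → ℝ)).symm (fun p => M p.1 p.2) :
      EuclideanSpace ℝ (Fin m × Fin n))‖ := by
  rw [EuclideanSpace.norm_eq, frob]
  congr 1
  rw [Fintype.sum_prod_type]
  simp [sq_abs]

lemma frob_add_le {m n : ℕ} (X Y : Matrix (Fin m) (Fin n) ℝ) :
    frob (X + Y) ≤ frob X + frob Y := by
  rw [frob_eq_norm, frob_eq_norm, frob_eq_norm]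
  have h : ((WithLp.equiv 2 ((Fin m × Fin n) → ℝ)).symm (fun p => (X + Y) p.1 p.2) :
      EuclideanSpace ℝ (Fin m × Fin n))
      = (WithLp.equiv 2 ((Fin m × Fin n) → ℝ)).symm (fun p => X p.1 p.2)
        + (WithLp.equiv 2 ((Fin m × Fin n) → ℝ)).symm (fun p => Y p.1 p.2) := by
    ext p; simp [Matrix.add_apply]
  rw [h]; exact norm_add_le _ _

lemma dot_eq_trace {d : ℕ} (M N : Matrix (Fin d) (Fin d) ℝ) :
    ∑ i, ∑ j, M i j * N i j = (Mᵀ * N).trace := by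
  rw [Matrix.trace]
  simp only [Matrix.diag, Matrix.mul_apply, Matrix.transpose_apply]
  rw [Finset.sum_comm]

lemma sqF_eq_trace {d : ℕ} (M : Matrix (Fin d) (Fin d) ℝ) : sqF M = (Mᵀ * M).trace := by
  rw [← dot_eq_trace]; simp [sqF, sq]

lemma key_trace {d : ℕ} (E B X₁ X₂ X₃ : Matrix (Fin d) (Fin d) ℝ) :
    (Eᵀ * (-(E * Bᵀ) * B + X₃ * (-(X₃ᵀ * E * X₁ᵀ) * X₁ + X₂ * -(X₂ᵀ * X₃ᵀ * E)))).trace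
      = -(sqF (-(X₂ᵀ * X₃ᵀ * E)) + sqF (-(X₃ᵀ * E * X₁ᵀ)) + sqF (-(E * Bᵀ))) := by
  simp only [sqF_eq_trace, Matrix.transpose_neg, Matrix.neg_mul, Matrix.mul_neg,
    Matrix.mul_add, Matrix.add_mul, Matrix.trace_add, Matrix.trace_neg, Matrix.transpose_mul,
    Matrix.transpose_transpose, neg_neg, Matrix.mul_assoc]
  rw [Matrix.trace_mul_comm B, Matrix.trace_mul_comm X₁]
  simp only [Matrix.mul_assoc]
  ring

lemma hasDerivAt_E {d : ℕ} (A : Matrix (Fin d) (Fin d) ℝ)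
    (W₁ W₂ W₃ : ℝ → Matrix (Fin d) (Fin d) ℝ)
    (D₁ D₂ D₃ : Matrix (Fin d) (Fin d) ℝ) (t : ℝ)
    (h1 : ∀ i j, HasDerivAt (fun s => W₁ s i j) (D₁ i j) t)
    (h2 : ∀ i j, HasDerivAt (fun s => W₂ s i j) (D₂ i j) t)
    (h3 : ∀ i j, HasDerivAt (fun s => W₃ s i j) (D₃ i j) t)
    (i j : Fin d) :
    HasDerivAt (fun s => (W₃ s * (W₂ s * W₁ s + 1) - A) i j)
      ((D₃ * (W₂ t * W₁ t + 1) + W₃ t * (D₂ * W₁ t + W₂ t * D₁)) i j) t := by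
  have key : ∀ s, (W₃ s * (W₂ s * W₁ s + 1) - A) i j
      = (∑ k, W₃ s i k * ((∑ l, W₂ s k l * W₁ s l j) + (1 : Matrix (Fin d) (Fin d) ℝ) k j)) - A i j := by
    intro s
    simp [Matrix.mul_apply, Matrix.sub_apply, Matrix.add_apply]
  simp only [key]
  have hD : HasDerivAt (fun s => (∑ k, W₃ s i k * ((∑ l, W₂ s k l * W₁ s l j) + (1 : Matrix (Fin d) (Fin d) ℝ) k j)) - A i j)
      (∑ k, (D₃ i k * ((∑ l, W₂ t k l * W₁ t l j) + (1 : Matrix (Fin d) (Fin d) ℝ) k j)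
        + W₃ t i k * (∑ l, (D₂ k l * W₁ t l j + W₂ t k l * D₁ l j)))) t := by
    refine HasDerivAt.sub_const _ ?_
    refine HasDerivAt.fun_sum fun k _ => ?_
    exact (h3 i k).mul (((HasDerivAt.fun_sum fun l _ => (h2 k l).mul (h1 l j)).add_const _))
  convert hD using 1
  simp [Matrix.mul_apply, Matrix.add_apply, Finset.mul_sum, Finset.sum_add_distrib]

lemma hasDerivAt_L {d : ℕ} (A : Matrix (Fin d) (Fin d) ℝ)
    (W₁ W₂ W₃ : ℝ → Matrix (Fin d) (Fin d) ℝ) (t : ℝ)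
    (h1 : ∀ i j, HasDerivAt (fun s => W₁ s i j)
      (-(((W₂ t)ᵀ * (W₃ t)ᵀ * (W₃ t * (W₂ t * W₁ t + 1) - A)) i j)) t)
    (h2 : ∀ i j, HasDerivAt (fun s => W₂ s i j)
      (-(((W₃ t)ᵀ * (W₃ t * (W₂ t * W₁ t + 1) - A) * (W₁ t)ᵀ) i j)) t)
    (h3 : ∀ i j, HasDerivAt (fun s => W₃ s i j)
      (-(((W₃ t * (W₂ t * W₁ t + 1) - A) * ((W₂ t * W₁ t + 1 : Matrix (Fin d) (Fin d) ℝ)ᵀ)) i j)) t) :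
    HasDerivAt (fun s => (1/2) * sqF (W₃ s * (W₂ s * W₁ s + 1) - A))
      (-(sqF (-((W₂ t)ᵀ * (W₃ t)ᵀ * (W₃ t * (W₂ t * W₁ t + 1) - A)))
        + sqF (-((W₃ t)ᵀ * (W₃ t * (W₂ t * W₁ t + 1) - A) * (W₁ t)ᵀ))
        + sqF (-((W₃ t * (W₂ t * W₁ t + 1) - A) * ((W₂ t * W₁ t + 1 : Matrix (Fin d) (Fin d) ℝ)ᵀ))))) t := by
  set E := fun s => W₃ s * (W₂ s * W₁ s + 1) - A with hEdef
  set B := W₂ t * W₁ t + 1 with hB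
  set D₁ := -((W₂ t)ᵀ * (W₃ t)ᵀ * E t) with hD1
  set D₂ := -((W₃ t)ᵀ * E t * (W₁ t)ᵀ) with hD2
  set D₃ := -(E t * Bᵀ) with hD3
  set N := D₃ * B + W₃ t * (D₂ * W₁ t + W₂ t * D₁) with hN
  have hE : ∀ i j, HasDerivAt (fun s => E s i j) (N i j) t := by
    intro i j
    exact hasDerivAt_E A W₁ W₂ W₃ D₁ D₂ D₃ t
      (fun i j => by simpa [hD1] using h1 i j)
      (fun i j => by simpa [hD2] using h2 i j)
      (fun i j => by simpa [hD3] using h3 i j) i j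
  have hsum : HasDerivAt (fun s => (1/2) * sqF (E s)) ((1/2) * ∑ i, ∑ j, 2 * E t i j * N i j) t := by
    refine HasDerivAt.const_mul _ ?_
    have : HasDerivAt (fun s => ∑ i, ∑ j, (E s i j)^2) (∑ i, ∑ j, 2 * E t i j * N i j) t := by
      refine HasDerivAt.fun_sum fun i _ => HasDerivAt.fun_sum fun j _ => ?_
      simpa [pow_one, mul_comm, mul_assoc] using (hE i j).fun_pow 2
    simpa [sqF] using this
  have heq : (1/2) * ∑ i, ∑ j, 2 * E t i j * N i j
      = -(sqF D₁ + sqF D₂ + sqF D₃) := by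
    have h2' : ∑ i, ∑ j, 2 * E t i j * N i j = 2 * ∑ i, ∑ j, E t i j * N i j := by
      rw [Finset.mul_sum]; congr 1; ext i; rw [Finset.mul_sum]; congr 1; ext j; ring
    rw [h2', dot_eq_trace]
    have hk := key_trace (E t) B (W₁ t) (W₂ t) (W₃ t)
    rw [hD1, hD2, hD3, hN, hD1, hD2, hD3]
    rw [hk]
    ring
  rw [← heq] at *
  exact hsum

lemma amgm_sqrt {x ε : ℝ} (hx : 0 ≤ x) (hε : 0 < ε) :
    Real.sqrt x ≤ ε / 2 + x / (2 * ε) := by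
  have h := Real.sq_sqrt hx
  have h0 := Real.sqrt_nonneg x
  have h2ε : (0:ℝ) < 2 * ε := by linarith
  rw [show ε / 2 + x / (2 * ε) = (ε^2 + x) / (2 * ε) by field_simp]
  rw [le_div_iff₀ h2ε]
  nlinarith [sq_nonneg (Real.sqrt x - ε)]

lemma bound_of_amgm {X t L0 : ℝ} (ht : 0 ≤ t) (hL0 : 0 ≤ L0)
    (h : ∀ ε, 0 < ε → X ≤ ε * t / 2 + L0 / (2 * ε)) : X ≤ Real.sqrt (t * L0) := by
  have hle0 : (∀ δ, 0 < δ → X ≤ δ) → X ≤ Real.sqrt (t * L0) := by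
    intro hδ
    refine le_trans ?_ (Real.sqrt_nonneg _)
    by_contra hc
    push_neg at hc
    have := hδ (X / 2) (by linarith)
    linarith
  rcases eq_or_lt_of_le ht with ht0 | ht0
  · -- t = 0
    rcases eq_or_lt_of_le hL0 with hL0' | hL0'
    · refine hle0 fun δ hδ => ?_
      have := h 1 one_pos
      rw [← ht0, ← hL0'] at this
      simp at this
      linarith
    · refine hle0 fun δ hδ => ?_
      have := h (L0 / (2 * δ)) (by positivity)
      rw [← ht0] at this
      have heq : L0 / (2 * (L0 / (2 * δ))) = δ := by field_simp
      calc X ≤ L0 / (2 * δ) * 0 / 2 + L0 / (2 * (L0 / (2 * δ))) := this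
        _ = δ := by rw [heq]; ring
  · rcases eq_or_lt_of_le hL0 with hL0' | hL0'
    · refine hle0 fun δ hδ => ?_
      have := h (2 * δ / t) (by positivity)
      rw [← hL0'] at this
      calc X ≤ 2 * δ / t * t / 2 + 0 / (2 * (2 * δ / t)) := this
        _ = δ := by field_simp; ring
    · have hst : (0:ℝ) < Real.sqrt t := Real.sqrt_pos.2 ht0
      have hsL : (0:ℝ) < Real.sqrt L0 := Real.sqrt_pos.2 hL0'
      have := h (Real.sqrt L0 / Real.sqrt t) (by positivity)
      have h1 : Real.sqrt t * Real.sqrt t = t := Real.mul_self_sqrt ht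
      have h2 : Real.sqrt L0 * Real.sqrt L0 = L0 := Real.mul_self_sqrt hL0
      have h3 : Real.sqrt (t * L0) = Real.sqrt t * Real.sqrt L0 := Real.sqrt_mul ht L0
      rw [h3]
      have : Real.sqrt L0 / Real.sqrt t * t / 2 + L0 / (2 * (Real.sqrt L0 / Real.sqrt t))
          = Real.sqrt t * Real.sqrt L0 := by
        field_simp
        nlinarith
      linarith [h (Real.sqrt L0 / Real.sqrt t) (by positivity), this]

/-- For `L(t) = ½‖W₃(t)(W₂(t)W₁(t)+I) - A‖_F²` under gradient flow,
`‖W₃(t)‖_F ≤ ‖W₃(0)‖_F + √(t · L(0))` for all `t ≥ 0`. -/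
theorem W3_norm_growth_bound {d : ℕ} (A : Matrix (Fin d) (Fin d) ℝ)
    (W₁ W₂ W₃ : ℝ → Matrix (Fin d) (Fin d) ℝ)
    (hf1 : ∀ t, 0 ≤ t → ∀ i j, HasDerivAt (fun s => W₁ s i j)
      (-(((W₂ t)ᵀ * (W₃ t)ᵀ * (W₃ t * (W₂ t * W₁ t + 1) - A)) i j)) t)
    (hf2 : ∀ t, 0 ≤ t → ∀ i j, HasDerivAt (fun s => W₂ s i j)
      (-(((W₃ t)ᵀ * (W₃ t * (W₂ t * W₁ t + 1) - A) * (W₁ t)ᵀ) i j)) t)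
    (hf3 : ∀ t, 0 ≤ t → ∀ i j, HasDerivAt (fun s => W₃ s i j)
      (-(((W₃ t * (W₂ t * W₁ t + 1) - A)
          * ((W₂ t * W₁ t + 1 : Matrix (Fin d) (Fin d) ℝ)ᵀ)) i j)) t) :
    ∀ t, 0 ≤ t → frob (W₃ t) ≤ frob (W₃ 0)
      + Real.sqrt (t * ((1 / 2) * frob (W₃ 0 * (W₂ 0 * W₁ 0 + 1) - A) ^ 2)) := by
  intro t ht
  have huIcc : Set.uIcc (0:ℝ) t = Set.Icc 0 t := Set.uIcc_of_le ht
  have hIccIci : Set.Icc (0:ℝ) t ⊆ Set.Ici 0 := fun x hx => hx.1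
  -- abbreviations
  set E : ℝ → Matrix (Fin d) (Fin d) ℝ := fun s => W₃ s * (W₂ s * W₁ s + 1) - A with hE
  set G₁ : ℝ → Matrix (Fin d) (Fin d) ℝ := fun s => -((W₂ s)ᵀ * (W₃ s)ᵀ * E s) with hG1
  set G₂ : ℝ → Matrix (Fin d) (Fin d) ℝ := fun s => -((W₃ s)ᵀ * E s * (W₁ s)ᵀ) with hG2
  set G₃ : ℝ → Matrix (Fin d) (Fin d) ℝ := fun s => -(E s * ((W₂ s * W₁ s + 1 : Matrix (Fin d) (Fin d) ℝ))ᵀ) with hG3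
  set L : ℝ → ℝ := fun s => (1/2) * sqF (E s) with hL
  -- continuity of entries of W's
  have hW1c : ∀ i j, ContinuousOn (fun s => W₁ s i j) (Set.Ici 0) :=
    fun i j s hs => ((hf1 s hs i j).continuousAt).continuousWithinAt
  have hW2c : ∀ i j, ContinuousOn (fun s => W₂ s i j) (Set.Ici 0) :=
    fun i j s hs => ((hf2 s hs i j).continuousAt).continuousWithinAt
  have hW3c : ∀ i j, ContinuousOn (fun s => W₃ s i j) (Set.Ici 0) :=
    fun i j s hs => ((hf3 s hs i j).continuousAt).continuousWithinAt
  have hW1C : ContinuousOn W₁ (Set.Ici 0) :=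
    continuousOn_pi.2 fun i => continuousOn_pi.2 fun j => hW1c i j
  have hW2C : ContinuousOn W₂ (Set.Ici 0) :=
    continuousOn_pi.2 fun i => continuousOn_pi.2 fun j => hW2c i j
  have hW3C : ContinuousOn W₃ (Set.Ici 0) :=
    continuousOn_pi.2 fun i => continuousOn_pi.2 fun j => hW3c i j
  have htrans : ∀ (W : ℝ → Matrix (Fin d) (Fin d) ℝ), ContinuousOn W (Set.Ici 0) →
      ContinuousOn (fun s => (W s)ᵀ) (Set.Ici 0) := by
    intro W hW
    exact continuousOn_pi.2 fun i => continuousOn_pi.2 fun j =>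
      (continuousOn_pi.1 (continuousOn_pi.1 hW j) i)
  have hEC : ContinuousOn E (Set.Ici 0) := by
    exact ((hW3C.mul ((hW2C.mul hW1C).add continuousOn_const)).sub continuousOn_const)
  have hG1C : ContinuousOn G₁ (Set.Ici 0) :=
    (((htrans _ hW2C).mul (htrans _ hW3C)).mul hEC).neg
  have hG2C : ContinuousOn G₂ (Set.Ici 0) :=
    (((htrans _ hW3C).mul hEC).mul (htrans _ hW1C)).neg
  have hG3C : ContinuousOn G₃ (Set.Ici 0) :=
    (hEC.mul (htrans _ ((hW2C.mul hW1C).add continuousOn_const))).neg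
  have hsqFcont : Continuous (fun M : Matrix (Fin d) (Fin d) ℝ => sqF M) := by
    refine continuous_finset_sum _ fun i _ => continuous_finset_sum _ fun j _ => ?_
    exact ((continuous_apply j).comp (continuous_apply i)).pow 2
  have hsq : ∀ (G : ℝ → Matrix (Fin d) (Fin d) ℝ), ContinuousOn G (Set.Ici 0) →
      ContinuousOn (fun s => sqF (G s)) (Set.Ici 0) :=
    fun G hG => hsqFcont.comp_continuousOn hG
  -- derivative of L
  have hLD : ∀ u ∈ Set.uIcc (0:ℝ) t, HasDerivAt L (-(sqF (G₁ u) + sqF (G₂ u) + sqF (G₃ u))) u := by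
    intro u hu
    rw [huIcc] at hu
    exact hasDerivAt_L A W₁ W₂ W₃ u (hf1 u hu.1) (hf2 u hu.1) (hf3 u hu.1)
  have hLDc : ContinuousOn (fun u => -(sqF (G₁ u) + sqF (G₂ u) + sqF (G₃ u))) (Set.Ici 0) :=
    (((hsq _ hG1C).add (hsq _ hG2C)).add (hsq _ hG3C)).neg
  have hLDint : IntervalIntegrable (fun u => -(sqF (G₁ u) + sqF (G₂ u) + sqF (G₃ u))) MeasureTheory.volume 0 t :=
    (hLDc.mono (huIcc ▸ hIccIci)).intervalIntegrable
  have hFTC : ∫ u in (0:ℝ)..t, -(sqF (G₁ u) + sqF (G₂ u) + sqF (G₃ u)) = L t - L 0 :=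
    integral_eq_sub_of_hasDerivAt hLD hLDint
  have hLt0 : 0 ≤ L t := by
    have := sqF_nonneg (E t); rw [hL]; positivity
  have hG3int : IntervalIntegrable (fun u => sqF (G₃ u)) MeasureTheory.volume 0 t :=
    (((hsq _ hG3C).mono (huIcc ▸ hIccIci))).intervalIntegrable
  have hsumint : IntervalIntegrable (fun u => sqF (G₁ u) + sqF (G₂ u) + sqF (G₃ u)) MeasureTheory.volume 0 t :=
    ((((hsq _ hG1C).add (hsq _ hG2C)).add (hsq _ hG3C)).mono (huIcc ▸ hIccIci)).intervalIntegrable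
  have hIa : ∫ u in (0:ℝ)..t, sqF (G₃ u) ≤ L 0 := by
    have h1 : ∫ u in (0:ℝ)..t, sqF (G₃ u) ≤ ∫ u in (0:ℝ)..t, (sqF (G₁ u) + sqF (G₂ u) + sqF (G₃ u)) := by
      refine integral_mono_on ht hG3int hsumint fun x _ => ?_
      have := sqF_nonneg (G₁ x); have := sqF_nonneg (G₂ x); linarith
    have h2 : ∫ u in (0:ℝ)..t, (sqF (G₁ u) + sqF (G₂ u) + sqF (G₃ u)) = L 0 - L t := by
      have := hFTC
      rw [integral_neg] at this
      linarith
    linarith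
  -- entrywise FTC for W₃
  have hW3FTC : ∀ i j, ∫ s in (0:ℝ)..t, G₃ s i j = W₃ t i j - W₃ 0 i j := by
    intro i j
    refine integral_eq_sub_of_hasDerivAt (f := fun s => W₃ s i j)
      (f' := fun s => G₃ s i j) (fun u hu => ?_) ?_
    · rw [huIcc] at hu
      have := hf3 u hu.1 i j
      simpa [hG3, Matrix.neg_apply] using this
    · refine ((ContinuousOn.mono ?_ (huIcc ▸ hIccIci)).intervalIntegrable)
      exact continuousOn_pi.1 (continuousOn_pi.1 hG3C i) j
  -- vector-valued bound
  set V : ℝ → EuclideanSpace ℝ (Fin d × Fin d) :=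
    fun s => (WithLp.equiv 2 ((Fin d × Fin d) → ℝ)).symm (fun p => G₃ s p.1 p.2) with hV
  have hVc : ContinuousOn V (Set.Ici 0) := by
    have : ContinuousOn (fun s => (fun p : Fin d × Fin d => G₃ s p.1 p.2)) (Set.Ici 0) :=
      continuousOn_pi.2 fun p => continuousOn_pi.1 (continuousOn_pi.1 hG3C p.1) p.2
    exact (PiLp.continuousLinearEquiv 2 ℝ (fun _ : Fin d × Fin d => ℝ)).symm.continuous.comp_continuousOn this
  have hVint : IntervalIntegrable V MeasureTheory.volume 0 t :=
    (hVc.mono (huIcc ▸ hIccIci)).intervalIntegrable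
  have hVeq : (∫ s in (0:ℝ)..t, V s)
      = (WithLp.equiv 2 ((Fin d × Fin d) → ℝ)).symm (fun p => (W₃ t - W₃ 0) p.1 p.2) := by
    refine PiLp.ext fun p => ?_
    have hproj := ContinuousLinearMap.intervalIntegral_comp_comm
      (EuclideanSpace.proj p : EuclideanSpace ℝ (Fin d × Fin d) →L[ℝ] ℝ) hVint
    have hcoord : ∀ s, (EuclideanSpace.proj p : EuclideanSpace ℝ (Fin d × Fin d) →L[ℝ] ℝ) (V s) = G₃ s p.1 p.2 := by
      intro s; simp [hV]
    simp only [hcoord] at hproj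
    have := hW3FTC p.1 p.2
    calc (∫ s in (0:ℝ)..t, V s) p = (EuclideanSpace.proj p : EuclideanSpace ℝ (Fin d × Fin d) →L[ℝ] ℝ) (∫ s in (0:ℝ)..t, V s) := rfl
      _ = ∫ s in (0:ℝ)..t, G₃ s p.1 p.2 := hproj.symm
      _ = W₃ t p.1 p.2 - W₃ 0 p.1 p.2 := this
      _ = (W₃ t - W₃ 0) p.1 p.2 := by simp [Matrix.sub_apply]
  have hnormV : ∀ s, ‖V s‖ = frob (G₃ s) := fun s => (frob_eq_norm (G₃ s)).symm
  have hstep : frob (W₃ t - W₃ 0) ≤ ∫ s in (0:ℝ)..t, frob (G₃ s) := by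
    have h1 : frob (W₃ t - W₃ 0) = ‖∫ s in (0:ℝ)..t, V s‖ := by
      rw [frob_eq_norm, hVeq]
    rw [h1]
    calc ‖∫ s in (0:ℝ)..t, V s‖ ≤ ∫ s in (0:ℝ)..t, ‖V s‖ :=
        norm_integral_le_integral_norm ht
      _ = ∫ s in (0:ℝ)..t, frob (G₃ s) := by
          congr 1; funext s; exact hnormV s
  -- AM-GM bound on the integral of frob (G₃ s)
  have hfrobG3c : ContinuousOn (fun s => frob (G₃ s)) (Set.Ici 0) := by
    have : ∀ s, frob (G₃ s) = Real.sqrt (sqF (G₃ s)) := fun s => frob_eq _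
    simp only [this]
    exact Real.continuous_sqrt.comp_continuousOn (hsq _ hG3C)
  have hfrobG3int : IntervalIntegrable (fun s => frob (G₃ s)) MeasureTheory.volume 0 t :=
    (hfrobG3c.mono (huIcc ▸ hIccIci)).intervalIntegrable
  have hamgm : ∀ ε, 0 < ε → (∫ s in (0:ℝ)..t, frob (G₃ s)) ≤ ε * t / 2 + L 0 / (2 * ε) := by
    intro ε hε
    have hrhsint : IntervalIntegrable (fun s => ε / 2 + sqF (G₃ s) / (2 * ε)) MeasureTheory.volume 0 t := by
      refine IntervalIntegrable.add (intervalIntegrable_const) ?_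
      exact hG3int.div_const _
    have hmono : (∫ s in (0:ℝ)..t, frob (G₃ s)) ≤ ∫ s in (0:ℝ)..t, (ε / 2 + sqF (G₃ s) / (2 * ε)) := by
      refine integral_mono_on ht hfrobG3int hrhsint fun x _ => ?_
      rw [frob_eq]
      exact amgm_sqrt (sqF_nonneg _) hε
    have hcalc : (∫ s in (0:ℝ)..t, (ε / 2 + sqF (G₃ s) / (2 * ε)))
        = ε / 2 * t + (∫ s in (0:ℝ)..t, sqF (G₃ s)) / (2 * ε) := by
      rw [integral_add intervalIntegrable_const (hG3int.div_const _), integral_const,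
        integral_div]
      simp only [smul_eq_mul, sub_zero]
      ring
    have hfin : (∫ s in (0:ℝ)..t, sqF (G₃ s)) / (2 * ε) ≤ L 0 / (2 * ε) := by gcongr
    have hring : ε / 2 * t = ε * t / 2 := by ring
    linarith
  have hL00 : 0 ≤ L 0 := by
    have := sqF_nonneg (E 0); rw [hL]; positivity
  have hXb : (∫ s in (0:ℝ)..t, frob (G₃ s)) ≤ Real.sqrt (t * L 0) :=
    bound_of_amgm ht hL00 hamgm
  have htri : frob (W₃ t) ≤ frob (W₃ 0) + frob (W₃ t - W₃ 0) := by
    have h := frob_add_le (W₃ 0) (W₃ t - W₃ 0)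
    simpa using h
  have hgoal : (1 / 2 : ℝ) * frob (W₃ 0 * (W₂ 0 * W₁ 0 + 1) - A) ^ 2 = L 0 := by
    rw [hL]
    have : frob (W₃ 0 * (W₂ 0 * W₁ 0 + 1) - A) ^ 2 = sqF (E 0) := frob_sq _
    rw [this]
  calc frob (W₃ t) ≤ frob (W₃ 0) + frob (W₃ t - W₃ 0) := htri
    _ ≤ frob (W₃ 0) + ∫ s in (0:ℝ)..t, frob (G₃ s) := by linarith
    _ ≤ frob (W₃ 0) + Real.sqrt (t * L 0) := by linarith
    _ = frob (W₃ 0) + Real.sqrt (t * ((1 / 2) * frob (W₃ 0 * (W₂ 0 * W₁ 0 + 1) - A) ^ 2)) := by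
        rw [hgoal]
end
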